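/- The ordered Ewens sampling formula defines a probability distribution: for each n ≥ 1 and θ > 0, the sum over all ordered set partitions π* = (B_1, ..., B_k) of [n] of θ^{k−1}/[θ+1]_{n−1} · ∏_{j=1}^k n_j!/(n_1+···+n_j), where n_j = |B_j|, equals 1. -/

import Mathlib

open scoped Classical

open Finset

/-- The unnormalized weight-sum over ordered partitions of `U` into `k` blocks. -/
noncomputable def ewP (n : ℕ) (U : Finset (Fin n)) (k : ℕ) : ℝ :=
  ∑ B : {B : Fin k → Finset (Fin n) //
      (∀ j, (B j).Nonempty) ∧ (Pairwise fun i j => Disjoint (B i) (B j)) ∧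
        Finset.univ.biUnion B = U},
    ∏ j : Fin k,
      (Nat.factorial ((B.1 j).card) : ℝ) / (∑ i ∈ Finset.Iic j, ((B.1 i).card : ℝ))

lemma fin_Iic_last (k : ℕ) : Finset.Iic (Fin.last k) = Finset.univ := by
  ext i; simp [Fin.le_last]

lemma Iic_castSucc_eq {k : ℕ} (j : Fin k) :
    Finset.Iic (Fin.castSucc j) = (Finset.Iic j).map Fin.castSuccEmb := by
  ext i
  simp only [Finset.mem_Iic, Finset.mem_map, Fin.castSuccEmb_apply]
  constructor
  · intro hi
    have hlt : i.val < k := lt_of_le_of_lt hi j.isLt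
    exact ⟨⟨i.val, hlt⟩, by simpa [Fin.le_def] using hi, rfl⟩
  · rintro ⟨a, ha, rfl⟩
    exact Fin.castSucc_le_castSucc_iff.mpr ha

lemma biUnion_succ {k n : ℕ} (B : Fin (k + 1) → Finset (Fin n)) :
    Finset.univ.biUnion B
      = Finset.univ.biUnion (fun j : Fin k => B j.castSucc) ∪ B (Fin.last k) := by
  ext x
  simp only [Finset.mem_biUnion, Finset.mem_union, Finset.mem_univ, true_and]
  constructor
  · rintro ⟨i, hi⟩
    rcases Fin.eq_castSucc_or_eq_last i with ⟨j, rfl⟩ | rfl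
    · exact Or.inl ⟨j, hi⟩
    · exact Or.inr hi
  · rintro (⟨j, hj⟩ | h)
    · exact ⟨j.castSucc, hj⟩
    · exact ⟨Fin.last k, h⟩

lemma ewP_zero (n : ℕ) (U : Finset (Fin n)) :
    ewP n U 0 = if U = ∅ then 1 else 0 := by
  split_ifs with h
  · subst h
    haveI : Unique {B : Fin 0 → Finset (Fin n) //
        (∀ j, (B j).Nonempty) ∧ (Pairwise fun i j => Disjoint (B i) (B j)) ∧
          Finset.univ.biUnion B = (∅ : Finset (Fin n))} :=
      ⟨⟨⟨fun i => i.elim0, fun j => j.elim0, fun i => i.elim0, by simp⟩⟩,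
        fun a => Subtype.ext (funext fun j => j.elim0)⟩
    rw [ewP, Fintype.sum_unique]
    simp
  · haveI : IsEmpty {B : Fin 0 → Finset (Fin n) //
        (∀ j, (B j).Nonempty) ∧ (Pairwise fun i j => Disjoint (B i) (B j)) ∧
          Finset.univ.biUnion B = U} := by
      refine ⟨fun B => h ?_⟩
      rw [← B.2.2.2]
      simp
    rw [ewP]
    exact Finset.sum_of_isEmpty _

lemma ewP_empty_succ (n k : ℕ) :
    ewP n (∅ : Finset (Fin n)) (k + 1) = 0 := by
  haveI : IsEmpty {B : Fin (k+1) → Finset (Fin n) //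
      (∀ j, (B j).Nonempty) ∧ (Pairwise fun i j => Disjoint (B i) (B j)) ∧
        Finset.univ.biUnion B = (∅ : Finset (Fin n))} := by
    refine ⟨fun B => ?_⟩
    obtain ⟨x, hx⟩ := B.2.1 0
    have : x ∈ Finset.univ.biUnion B.1 := Finset.mem_biUnion.2 ⟨0, Finset.mem_univ _, hx⟩
    rw [B.2.2.2] at this
    exact absurd this (Finset.notMem_empty x)
  rw [ewP]
  exact Finset.sum_of_isEmpty _

lemma ewP_card_lt (n : ℕ) (U : Finset (Fin n)) (k : ℕ) (h : U.card < k) :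
    ewP n U k = 0 := by
  haveI : IsEmpty {B : Fin k → Finset (Fin n) //
      (∀ j, (B j).Nonempty) ∧ (Pairwise fun i j => Disjoint (B i) (B j)) ∧
        Finset.univ.biUnion B = U} := by
    refine ⟨fun B => absurd ?_ (Nat.not_le.2 h)⟩
    have hcard : U.card = ∑ j : Fin k, (B.1 j).card := by
      conv_lhs => rw [← B.2.2.2]
      exact Finset.card_biUnion (fun i _ j _ hij => B.2.2.1 hij)
    have h1 : k ≤ ∑ j : Fin k, (B.1 j).card := by
      calc k = ∑ _j : Fin k, 1 := by simp
        _ ≤ _ := Finset.sum_le_sum fun j _ => Nat.one_le_iff_ne_zero.2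
            (Finset.card_ne_zero_of_mem (B.2.1 j).choose_spec)
    omega
  rw [ewP]
  exact Finset.sum_of_isEmpty _

lemma ewP_succ (n : ℕ) (U : Finset (Fin n)) (k : ℕ) :
    ewP n U (k + 1) =
      ∑ T ∈ U.powerset.filter Finset.Nonempty,
        (Nat.factorial T.card : ℝ) / (U.card : ℝ) * ewP n (U \ T) k := by
  classical
  have key : ∀ (m : ℕ) (B : Fin m → Finset (Fin n)),
      (Pairwise fun i j => Disjoint (B i) (B j)) →
      ((Finset.univ.biUnion B).card : ℝ) = ∑ i : Fin m, ((B i).card : ℝ) := by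
    intro m B hd
    rw [Finset.card_biUnion (fun i _ j _ hij => hd hij)]
    push_cast
    rfl
  have hL : ewP n U (k+1) = ∑ B ∈ Finset.univ.filter
      (fun B : Fin (k+1) → Finset (Fin n) =>
        (∀ j, (B j).Nonempty) ∧ (Pairwise fun i j => Disjoint (B i) (B j)) ∧
          Finset.univ.biUnion B = U),
      ∏ j : Fin (k+1),
        (Nat.factorial ((B j).card) : ℝ) / (∑ i ∈ Finset.Iic j, ((B i).card : ℝ)) := by
    rw [ewP]
    refine (Finset.sum_subtype _ ?_ (fun B : Fin (k+1) → Finset (Fin n) =>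
      ∏ j : Fin (k+1),
        (Nat.factorial ((B j).card) : ℝ) /
          (∑ i ∈ Finset.Iic j, ((B i).card : ℝ)))).symm
    intro x
    simp
  have main : (∑ B ∈ Finset.univ.filter
      (fun B : Fin (k+1) → Finset (Fin n) =>
        (∀ j, (B j).Nonempty) ∧ (Pairwise fun i j => Disjoint (B i) (B j)) ∧
          Finset.univ.biUnion B = U),
      ∏ j : Fin (k+1),
        (Nat.factorial ((B j).card) : ℝ) / (∑ i ∈ Finset.Iic j, ((B i).card : ℝ)))
    = ∑ p ∈ (U.powerset.filter Finset.Nonempty).sigma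
        (fun T => Finset.univ.filter
          (fun B' : Fin k → Finset (Fin n) =>
            (∀ j, (B' j).Nonempty) ∧ (Pairwise fun i j => Disjoint (B' i) (B' j)) ∧
              Finset.univ.biUnion B' = U \ T)),
        (Nat.factorial p.1.card : ℝ) / (U.card : ℝ) *
          ∏ j : Fin k,
            (Nat.factorial ((p.2 j).card) : ℝ) /
              (∑ i ∈ Finset.Iic j, ((p.2 i).card : ℝ)) := by
    refine Finset.sum_bij' (fun B _ => ⟨B (Fin.last k), fun j => B j.castSucc⟩)
      (fun p _ => Fin.snoc p.2 p.1) ?_ ?_ ?_ ?_ ?_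
    · -- forward membership
      intro B hB
      simp only [Finset.mem_filter, Finset.mem_univ, true_and] at hB
      obtain ⟨h1, h2, h3⟩ := hB
      rw [Finset.mem_sigma]
      constructor
      · exact Finset.mem_filter.2 ⟨Finset.mem_powerset.2
          (h3 ▸ Finset.subset_biUnion_of_mem B (Finset.mem_univ (Fin.last k))), h1 _⟩
      · refine Finset.mem_filter.2 ⟨Finset.mem_univ _, fun j => h1 _, ?_, ?_⟩
        · intro a b hab
          exact h2 ((Fin.castSucc_injective k).ne hab)
        · have hdisj : Disjoint (Finset.univ.biUnion fun j : Fin k => B j.castSucc)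
              (B (Fin.last k)) :=
            (Finset.disjoint_biUnion_left _ _ _).2
              fun j _ => h2 (Fin.castSucc_lt_last j).ne
          have hsplit := biUnion_succ B
          rw [h3] at hsplit
          rw [hsplit]
          exact (Finset.union_sdiff_cancel_right hdisj).symm
    · -- backward membership
      intro p hp
      rw [Finset.mem_sigma] at hp
      obtain ⟨hT, hB'⟩ := hp
      rw [Finset.mem_filter, Finset.mem_powerset] at hT
      simp only [Finset.mem_filter, Finset.mem_univ, true_and] at hB'
      obtain ⟨h1, h2, h3⟩ := hB'
      refine Finset.mem_filter.2 ⟨Finset.mem_univ _, ?_, ?_, ?_⟩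
      · intro j
        rcases Fin.eq_castSucc_or_eq_last j with ⟨j', rfl⟩ | rfl
        · rw [Fin.snoc_castSucc]; exact h1 j'
        · rw [Fin.snoc_last]; exact hT.2
      · have hsub : ∀ a : Fin k, p.2 a ⊆ U \ p.1 :=
          fun a => h3 ▸ Finset.subset_biUnion_of_mem p.2 (Finset.mem_univ a)
        intro a b hab
        rcases Fin.eq_castSucc_or_eq_last a with ⟨a', rfl⟩ | rfl <;>
          rcases Fin.eq_castSucc_or_eq_last b with ⟨b', rfl⟩ | rfl
        · rw [Fin.snoc_castSucc, Fin.snoc_castSucc]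
          exact h2 ((Fin.castSucc_injective k).ne_iff.1 hab)
        · rw [Fin.snoc_castSucc, Fin.snoc_last]
          exact Finset.disjoint_of_subset_left (hsub a') Finset.sdiff_disjoint
        · rw [Fin.snoc_castSucc, Fin.snoc_last]
          exact (Finset.disjoint_of_subset_left (hsub b') Finset.sdiff_disjoint).symm
        · exact absurd rfl hab
      · rw [biUnion_succ]
        simp only [Fin.snoc_castSucc, Fin.snoc_last]
        rw [h3]
        exact Finset.sdiff_union_of_subset hT.1
    · -- left inverse
      intro B _
      dsimp only
      refine funext fun j => ?_
      rcases Fin.eq_castSucc_or_eq_last j with ⟨j', rfl⟩ | rfl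
      · rw [Fin.snoc_castSucc]
      · rw [Fin.snoc_last]
    · -- right inverse
      intro p _
      obtain ⟨T, B'⟩ := p
      simp [Fin.snoc_last, Fin.snoc_castSucc]
    · -- weights agree
      intro B hB
      dsimp only
      simp only [Finset.mem_filter, Finset.mem_univ, true_and] at hB
      obtain ⟨h1, h2, h3⟩ := hB
      have hlast : (∑ i ∈ Finset.Iic (Fin.last k), ((B i).card : ℝ)) = (U.card : ℝ) := by
        rw [fin_Iic_last, ← h3]
        exact (key (k+1) B h2).symm
      rw [Fin.prod_univ_castSucc, hlast, mul_comm]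
      congr 1
      refine Finset.prod_congr rfl fun j _ => ?_
      rw [Iic_castSucc_eq, Finset.sum_map]
      rfl

  rw [hL, main, Finset.sum_sigma]
  refine Finset.sum_congr rfl fun T hT => ?_
  dsimp only
  rw [ewP, Finset.mul_sum]
  exact Finset.sum_subtype _ (fun x => by simp) _


noncomputable def fθ (θ : ℝ) (m : ℕ) : ℝ := ∏ i ∈ Finset.range m, (θ + 1 + (i : ℝ))

lemma telescope (θ : ℝ) : ∀ N : ℕ,
    ∑ j ∈ Finset.range N, θ * fθ θ j / (Nat.factorial (j+1) : ℝ) + 1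
      = fθ θ N / (Nat.factorial N : ℝ) := by
  intro N
  induction N with
  | zero => simp [fθ]
  | succ N ih =>
    rw [Finset.sum_range_succ, add_right_comm, ih]
    have hN : (Nat.factorial N : ℝ) ≠ 0 := Nat.cast_ne_zero.2 (Nat.factorial_ne_zero N)
    have hN1 : (Nat.factorial (N+1) : ℝ) ≠ 0 := Nat.cast_ne_zero.2 (Nat.factorial_ne_zero _)
    have hfact : (Nat.factorial (N+1) : ℝ) = (N+1) * Nat.factorial N := by
      rw [Nat.factorial_succ]; push_cast; ring
    have hf : fθ θ (N+1) = fθ θ N * (θ + 1 + N) := by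
      rw [fθ, Finset.prod_range_succ]; rfl
    rw [hf, hfact]
    have hN' : ((N : ℝ) + 1) ≠ 0 := by positivity
    field_simp
    ring

lemma key_sum (θ : ℝ) (m : ℕ) (hm : 1 ≤ m) :
    ∑ r ∈ Finset.range (m+1),
      (Nat.choose m r : ℝ) *
        (if r = 0 then 0 else (Nat.factorial r : ℝ) / (m : ℝ) *
          (if r = m then 1 else θ * fθ θ (m - r - 1)))
      = fθ θ (m - 1) := by
  obtain ⟨M, rfl⟩ : ∃ M, m = M + 1 := ⟨m - 1, by omega⟩
  have hMcast : ((M : ℝ) + 1) ≠ 0 := by positivity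
  have hfM : (Nat.factorial M : ℝ) ≠ 0 := Nat.cast_ne_zero.2 (Nat.factorial_ne_zero M)
  have hmid : ∀ i ∈ Finset.range M,
      (Nat.choose (M+1) (i+1) : ℝ) *
        (if i+1 = 0 then 0 else (Nat.factorial (i+1) : ℝ) / ((M+1 : ℕ) : ℝ) *
          (if i+1 = M+1 then 1 else θ * fθ θ (M+1 - (i+1) - 1)))
      = (Nat.factorial M : ℝ) *
          (θ * fθ θ (M-1-i) / (Nat.factorial ((M-1-i)+1) : ℝ)) := by
    intro i hi
    rw [Finset.mem_range] at hi
    rw [if_neg (Nat.succ_ne_zero i), if_neg (by omega)]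
    have harg : M + 1 - (i+1) - 1 = M - 1 - i := by omega
    have harg2 : (M - 1 - i) + 1 = M - i := by omega
    rw [harg, harg2]
    have hch' : Nat.choose (M+1) (i+1) * Nat.factorial (i+1) * Nat.factorial (M-i)
        = Nat.factorial (M+1) := by
      have h := Nat.choose_mul_factorial_mul_factorial (show i+1 ≤ M+1 by omega)
      simpa [show M+1-(i+1) = M-i from by omega] using h
    have hf1 : (Nat.factorial (i+1) : ℝ) ≠ 0 := Nat.cast_ne_zero.2 (Nat.factorial_ne_zero _)
    have hf2 : (Nat.factorial (M-i) : ℝ) ≠ 0 := Nat.cast_ne_zero.2 (Nat.factorial_ne_zero _)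
    have hch : (Nat.choose (M+1) (i+1) : ℝ)
        = (Nat.factorial (M+1) : ℝ) /
            ((Nat.factorial (i+1) : ℝ) * (Nat.factorial (M-i) : ℝ)) := by
      rw [eq_div_iff (by positivity)]
      push_cast [← hch']
      ring
    have hfM1 : (Nat.factorial (M+1) : ℝ) = ((M : ℝ) + 1) * (Nat.factorial M : ℝ) := by
      rw [Nat.factorial_succ]; push_cast; ring
    rw [hch, hfM1]
    push_cast
    field_simp
  rw [Finset.sum_range_succ, Finset.sum_range_succ', Finset.sum_congr rfl hmid]
  have h0 : (Nat.choose (M+1) 0 : ℝ) *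
      (if (0:ℕ) = 0 then (0:ℝ) else (Nat.factorial 0 : ℝ) / ((M+1 : ℕ) : ℝ) *
        (if (0:ℕ) = M+1 then 1 else θ * fθ θ (M+1 - 0 - 1))) = 0 := by
    rw [if_pos rfl, mul_zero]
  rw [h0]
  have hlast : (Nat.choose (M+1) (M+1) : ℝ) *
      (if M+1 = 0 then (0:ℝ) else (Nat.factorial (M+1) : ℝ) / ((M+1 : ℕ) : ℝ) *
        (if M+1 = M+1 then 1 else θ * fθ θ (M+1 - (M+1) - 1)))
      = (Nat.factorial M : ℝ) := by
    rw [if_neg (Nat.succ_ne_zero M), if_pos rfl, Nat.choose_self, Nat.factorial_succ]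
    push_cast
    field_simp
  rw [hlast, ← Finset.mul_sum]
  have hrefl : ∑ i ∈ Finset.range M, θ * fθ θ (M-1-i) / (Nat.factorial ((M-1-i)+1) : ℝ)
      = ∑ j ∈ Finset.range M, θ * fθ θ j / (Nat.factorial (j+1) : ℝ) :=
    Finset.sum_range_reflect (fun j => θ * fθ θ j / (Nat.factorial (j+1) : ℝ)) M
  rw [hrefl]
  have := telescope θ M
  have hgoal : (Nat.factorial M : ℝ) *
      (∑ j ∈ Finset.range M, θ * fθ θ j / (Nat.factorial (j+1) : ℝ)) + 0
      + (Nat.factorial M : ℝ)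
      = (Nat.factorial M : ℝ) *
        (∑ j ∈ Finset.range M, θ * fθ θ j / (Nat.factorial (j+1) : ℝ) + 1) := by ring
  rw [hgoal, this]
  rw [Nat.add_sub_cancel]
  field_simp


lemma ewQ (n : ℕ) (hn : 1 ≤ n) (θ : ℝ) :
    ∀ m : ℕ, ∀ U : Finset (Fin n), U.Nonempty → U.card = m →
      ∑ k ∈ Finset.range (n+1), θ ^ (k-1) * ewP n U k = fθ θ (m - 1) := by
  intro m
  induction m using Nat.strong_induction_on with
  | _ m IH =>
  intro U hU hcard
  have hm : 1 ≤ m := hcard ▸ Finset.card_pos.2 hU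
  have hUne : U ≠ ∅ := Finset.nonempty_iff_ne_empty.1 hU
  have hmn : m ≤ n := by
    have h := Finset.card_le_univ U
    rw [Fintype.card_fin, hcard] at h
    exact h
  rw [Finset.sum_range_succ']
  have hz : θ ^ (0-1) * ewP n U 0 = 0 := by
    rw [ewP_zero, if_neg hUne, mul_zero]
  rw [hz, add_zero]
  have hstep : ∀ k ∈ Finset.range n, θ ^ ((k+1)-1) * ewP n U (k+1)
      = ∑ T ∈ U.powerset.filter Finset.Nonempty,
          (Nat.factorial T.card : ℝ) / (U.card : ℝ) * (θ^k * ewP n (U \ T) k) := by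
    intro k _
    rw [Nat.add_sub_cancel, ewP_succ, Finset.mul_sum]
    exact Finset.sum_congr rfl fun T _ => by ring
  rw [Finset.sum_congr rfl hstep, Finset.sum_comm]
  have hinner : ∀ T ∈ U.powerset.filter Finset.Nonempty,
      ∑ k ∈ Finset.range n,
          (Nat.factorial T.card : ℝ) / (U.card : ℝ) * (θ^k * ewP n (U \ T) k)
      = (Nat.factorial T.card : ℝ) / (U.card : ℝ) *
          (if T = U then 1 else θ * fθ θ (m - T.card - 1)) := by
    intro T hT
    rw [← Finset.mul_sum]
    congr 1
    rw [Finset.mem_filter, Finset.mem_powerset] at hT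
    by_cases hTU : T = U
    · rw [if_pos hTU, hTU, Finset.sdiff_self]
      obtain ⟨n', rfl⟩ : ∃ n', n = n' + 1 := ⟨n-1, by omega⟩
      rw [Finset.sum_range_succ']
      have hzz : ∀ k ∈ Finset.range n', θ^(k+1) * ewP (n'+1) (∅ : Finset (Fin (n'+1))) (k+1) = 0 :=
        fun k _ => by rw [ewP_empty_succ, mul_zero]
      rw [Finset.sum_congr rfl hzz, Finset.sum_const_zero, zero_add, pow_zero, one_mul,
        ewP_zero, if_pos rfl]
    · rw [if_neg hTU]
      have hV : (U \ T).Nonempty :=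
        Finset.sdiff_nonempty.2 (fun hsub => hTU (Finset.Subset.antisymm hT.1 hsub))
      have hVcard : (U \ T).card = m - T.card := by rw [Finset.card_sdiff_of_subset hT.1, hcard]
      have hTpos : 1 ≤ T.card := Finset.card_pos.2 hT.2
      have hVlt : (U \ T).card < m := by omega
      have hVltn : (U \ T).card < n := by omega
      have hext : ∑ k ∈ Finset.range n, θ^k * ewP n (U \ T) k
          = ∑ k ∈ Finset.range (n+1), θ^k * ewP n (U \ T) k := by
        rw [Finset.sum_range_succ, ewP_card_lt n (U \ T) n hVltn, mul_zero, add_zero]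
      rw [hext]
      have hterm : ∀ k ∈ Finset.range (n+1),
          θ^k * ewP n (U \ T) k = θ * (θ^(k-1) * ewP n (U \ T) k) := by
        intro k _
        cases k with
        | zero =>
          rw [ewP_zero, if_neg (Finset.nonempty_iff_ne_empty.1 hV)]
          ring
        | succ k =>
          rw [Nat.add_sub_cancel]
          ring
      rw [Finset.sum_congr rfl hterm, ← Finset.mul_sum]
      congr 1
      exact IH (m - T.card) (by omega) (U \ T) hV hVcard
  rw [Finset.sum_congr rfl hinner, Finset.sum_filter, Finset.sum_powerset, hcard]
  have hgrp : ∀ r ∈ Finset.range (m+1),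
      ∑ T ∈ Finset.powersetCard r U,
        (if T.Nonempty then
          (Nat.factorial T.card : ℝ) / (m : ℝ) *
            (if T = U then 1 else θ * fθ θ (m - T.card - 1)) else 0)
      = (Nat.choose m r : ℝ) *
          (if r = 0 then 0 else (Nat.factorial r : ℝ) / (m : ℝ) *
            (if r = m then 1 else θ * fθ θ (m - r - 1))) := by
    intro r _
    have hcongr : ∀ T ∈ Finset.powersetCard r U,
        (if T.Nonempty then
          (Nat.factorial T.card : ℝ) / (m : ℝ) *
            (if T = U then 1 else θ * fθ θ (m - T.card - 1)) else 0)
        = (if r = 0 then 0 else (Nat.factorial r : ℝ) / (m : ℝ) *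
            (if r = m then 1 else θ * fθ θ (m - r - 1))) := by
      intro T hTm
      rw [Finset.mem_powersetCard] at hTm
      obtain ⟨hsub, hcardT⟩ := hTm
      by_cases hr : r = 0
      · subst hr
        have hTe : ¬ T.Nonempty := by
          rw [← Finset.card_pos, hcardT]
          omega
        rw [if_neg hTe, if_pos rfl]
      · have hTne : T.Nonempty := Finset.card_pos.1 (by rw [hcardT]; omega)
        rw [if_pos hTne, if_neg hr, hcardT]
        by_cases hrm : r = m
        · have hTU : T = U := Finset.eq_of_subset_of_card_le hsub
            (le_of_eq (by rw [hcard, hcardT, hrm]))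
          rw [if_pos hTU, if_pos hrm]
        · have hTU : T ≠ U := fun h => hrm (by rw [← hcardT, h, hcard])
          rw [if_neg hTU, if_neg hrm]
    rw [Finset.sum_congr rfl hcongr, Finset.sum_const, Finset.card_powersetCard, hcard,
      nsmul_eq_mul]
  rw [Finset.sum_congr rfl hgrp]
  exact key_sum θ m hm


/-- the ordered Ewens sampling formula defines a probability distribution:
summing `θ^{k−1}/[θ+1]_{n−1} · ∏_{j=1}^k n_j!/(n_1+⋯+n_j)` over all ordered set
partitions `(B_1, …, B_k)` of `[n]` gives `1`. -/
theorem ordered_ewens_sampling_formula_sums_to_one (n : ℕ) (hn : 1 ≤ n) (θ : ℝ)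
    (hθ : 0 < θ) :
    ∑ k ∈ Finset.range (n + 1),
      ∑ B : {B : Fin k → Finset (Fin n) //
          (∀ j, (B j).Nonempty) ∧ (Pairwise fun i j => Disjoint (B i) (B j)) ∧
            Finset.univ.biUnion B = Finset.univ},
        θ ^ (k - 1) / (∏ i ∈ Finset.range (n - 1), (θ + 1 + i)) *
          ∏ j : Fin k,
            (Nat.factorial ((B.1 j).card) : ℝ) /
              (∑ i ∈ Finset.Iic j, ((B.1 i).card : ℝ)) = 1 := by
  classical
  have hDpos : (0:ℝ) < ∏ i ∈ Finset.range (n - 1), (θ + 1 + (i:ℝ)) :=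
    Finset.prod_pos fun i _ => by positivity
  haveI : Nonempty (Fin n) := ⟨⟨0, hn⟩⟩
  have huniv : (Finset.univ : Finset (Fin n)).Nonempty := Finset.univ_nonempty
  have hQ := ewQ n hn θ n Finset.univ huniv (by rw [Finset.card_univ, Fintype.card_fin])
  have hterm : ∀ k ∈ Finset.range (n+1),
      (∑ B : {B : Fin k → Finset (Fin n) //
          (∀ j, (B j).Nonempty) ∧ (Pairwise fun i j => Disjoint (B i) (B j)) ∧
            Finset.univ.biUnion B = Finset.univ},
        θ ^ (k - 1) / (∏ i ∈ Finset.range (n - 1), (θ + 1 + i)) *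
          ∏ j : Fin k,
            (Nat.factorial ((B.1 j).card) : ℝ) /
              (∑ i ∈ Finset.Iic j, ((B.1 i).card : ℝ)))
      = θ ^ (k-1) * ewP n Finset.univ k / (∏ i ∈ Finset.range (n - 1), (θ + 1 + (i:ℝ))) := by
    intro k _
    rw [ewP, Finset.mul_sum, Finset.sum_div]
    exact Finset.sum_congr rfl fun B _ => by ring
  rw [Finset.sum_congr rfl hterm, ← Finset.sum_div, hQ]
  rw [div_eq_one_iff_eq (ne_of_gt hDpos)]
  rfl
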